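/- For all α > 0, β > 0 and δ ≥ 2αC_f/μ, there exists a constant C > 0 such that for all sufficiently small ε > 0: if ξ ∈ [ε^α, 2C₀ − ε^{β+δ}], then Y(τ, ξ + ε^{β+δ}) − Y(τ, ξ) ≤ ε^β for all τ ∈ [0, C|log ε|]. -/

import Mathlib

open Set Real Filter Topology

/-- If `g' = f ∘ g` on `[0,∞)`, `f < 0` on `[b,∞)` and `g 0 ≤ b`, then `g ≤ b` on `[0,∞)`. -/
lemma flow_upper (f g : ℝ → ℝ) (b : ℝ)
    (hg : ∀ τ : ℝ, 0 ≤ τ → HasDerivAt g (f (g τ)) τ)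
    (hfb : ∀ u : ℝ, b ≤ u → f u < 0)
    (h0 : g 0 ≤ b) : ∀ τ : ℝ, 0 ≤ τ → g τ ≤ b := by
  by_contra hcon
  push_neg at hcon
  obtain ⟨τ₁, hτ₁0, hτ₁⟩ := hcon
  have hc : ContinuousOn g (Icc 0 τ₁) := fun τ hτ =>
    ((hg τ hτ.1).continuousAt).continuousWithinAt
  set S : Set ℝ := Icc 0 τ₁ ∩ g ⁻¹' Iic b with hS
  have hSclosed : IsClosed S := hc.preimage_isClosed_of_isClosed isClosed_Icc isClosed_Iic
  have h0S : (0:ℝ) ∈ S := ⟨⟨le_refl 0, hτ₁0⟩, h0⟩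
  have hSbdd : BddAbove S := BddAbove.mono (inter_subset_left) bddAbove_Icc
  set s := sSup S with hs
  have hsS : s ∈ S := hSclosed.csSup_mem ⟨0, h0S⟩ hSbdd
  have hs0 : 0 ≤ s := hsS.1.1
  have hsτ₁ : s ≤ τ₁ := hsS.1.2
  have hgs : g s ≤ b := hsS.2
  have hslt : s < τ₁ := lt_of_le_of_ne hsτ₁ (by intro h; rw [h] at hgs; exact absurd hgs (not_le.2 hτ₁))
  have key : ∀ τ : ℝ, s < τ → τ ≤ τ₁ → b < g τ := by
    intro τ h1 h2
    by_contra h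
    push_neg at h
    exact absurd (le_csSup hSbdd (⟨⟨hs0.trans h1.le, h2⟩, h⟩ : τ ∈ S)) (not_le.2 h1)
  -- g s = b
  have hgsb : g s = b := by
    refine le_antisymm hgs ?_
    have hne : (𝓝[Ioc s τ₁] s).NeBot := by
      rw [← mem_closure_iff_nhdsWithin_neBot, closure_Ioc hslt.ne]
      exact ⟨le_refl s, hslt.le⟩
    have htend : Filter.Tendsto g (𝓝[Ioc s τ₁] s) (𝓝 (g s)) :=
      ((hc s ⟨hs0, hsτ₁⟩).mono (fun x hx => ⟨hs0.trans hx.1.le, hx.2⟩)).tendsto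
    refine ge_of_tendsto htend (eventually_mem_nhdsWithin.mono ?_)
    exact fun x hx => (key x hx.1 hx.2).le
  have hanti : StrictAntiOn g (Icc s τ₁) := by
    refine strictAntiOn_of_deriv_neg (convex_Icc s τ₁)
      (hc.mono (Icc_subset_Icc hs0 le_rfl)) ?_
    intro x hx
    rw [interior_Icc] at hx
    rw [(hg x (hs0.trans hx.1.le)).deriv]
    exact hfb _ (key x hx.1 hx.2.le).le
  have := hanti (left_mem_Icc.2 hslt.le) (right_mem_Icc.2 hslt.le) hslt
  rw [hgsb] at this
  exact absurd hτ₁ (not_lt.2 this.le)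

/-- Corollary 3.1 (i): for all `α > 0`, `β > 0` and `δ ≥ 2αC_f/μ` there exists `C > 0`
such that for all sufficiently small `ε > 0`, if `ξ ∈ [ε^α, 2C₀ − ε^{β+δ}]` then
`Y(τ, ξ + ε^{β+δ}) − Y(τ, ξ) ≤ ε^β` for all `τ ∈ [0, C|log ε|]`. -/
theorem stmt_1
    (f : ℝ → ℝ) (p μ C₀ Cf : ℝ)
    (hf : ContDiff ℝ 2 f)
    (hp : 0 < p) (hμ : 0 < μ) (hC₀ : 1 < C₀)
    (hzeros : ∀ u : ℝ, f u = 0 ↔ u = -1 ∨ u = 0 ∨ u = 1)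
    (hf'1 : deriv f 1 = -p) (hf'm1 : deriv f (-1) = -p)
    (hf'0 : deriv f 0 = μ)
    (hodd : ∀ u : ℝ, f (-u) = -f u)
    (hf_lin : ∀ u : ℝ, 1 ≤ u → f u ≤ -p * (u - 1))
    (hCf : IsLUB (deriv f '' Set.Icc (-(2 * C₀)) (2 * C₀)) Cf)
    (Y : ℝ → ℝ → ℝ)
    (hY0 : ∀ ξ : ℝ, Y 0 ξ = ξ)
    (hYode : ∀ ξ : ℝ, ∀ τ : ℝ, 0 ≤ τ → HasDerivAt (fun t => Y t ξ) (f (Y τ ξ)) τ)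
    (α β δ : ℝ) (hα : 0 < α) (hβ : 0 < β) (hδ : 2 * α * Cf / μ ≤ δ) :
    ∃ C : ℝ, 0 < C ∧
      ∃ ε₀ : ℝ, 0 < ε₀ ∧ ∀ ε : ℝ, 0 < ε → ε < ε₀ →
        ∀ ξ : ℝ, ε ^ α ≤ ξ → ξ ≤ 2 * C₀ - ε ^ (β + δ) →
          ∀ τ : ℝ, 0 ≤ τ → τ ≤ C * |Real.log ε| →
            Y τ (ξ + ε ^ (β + δ)) - Y τ ξ ≤ ε ^ β := by
  have hb2 : (2:ℝ) < 2 * C₀ := by linarith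
  set b := 2 * C₀ with hbdef
  -- f is negative above b
  have hfneg : ∀ u : ℝ, b ≤ u → f u < 0 := by
    intro u hu
    have h1 : (1:ℝ) ≤ u := by linarith
    have := hf_lin u h1
    nlinarith
  -- Lipschitz constant for f on [-b, b]
  have hderivcont : Continuous (deriv f) := hf.continuous_deriv one_le_two
  obtain ⟨M, hM⟩ := (isCompact_Icc : IsCompact (Icc (-b) b)).exists_bound_of_continuousOn
    hderivcont.continuousOn
  set K : NNReal := M.toNNReal + 1 with hKdef
  have hKcoe : (K : ℝ) = max M 0 + 1 := by
    rw [hKdef, NNReal.coe_add, Real.coe_toNNReal', NNReal.coe_one]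
  have hK1 : (1:ℝ) ≤ (K : ℝ) := by rw [hKcoe]; have := le_max_right M 0; linarith
  have hKpos : (0:ℝ) < (K : ℝ) := lt_of_lt_of_le one_pos hK1
  have hlip : LipschitzOnWith K f (Icc (-b) b) := by
    refine Convex.lipschitzOnWith_of_nnnorm_deriv_le
      (fun x _ => (hf.differentiable (by norm_num)).differentiableAt) ?_ (convex_Icc _ _)
    
    intro x hx
    rw [← NNReal.coe_le_coe, coe_nnnorm, hKcoe]
    have := hM x hx
    have := le_max_left M 0
    linarith
  -- δ is positive
  have hCfμ : μ ≤ Cf := hCf.1 ⟨0, Set.mem_Icc.2 ⟨by linarith, by linarith⟩, hf'0⟩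
  have hCfpos : 0 < Cf := lt_of_lt_of_le hμ hCfμ
  have hδpos : 0 < δ := lt_of_lt_of_le (by positivity) hδ
  -- invariance of [-b, b]
  have inv : ∀ ζ : ℝ, ζ ∈ Icc (-b) b → ∀ t : ℝ, 0 ≤ t → Y t ζ ∈ Icc (-b) b := by
    intro ζ hζ t ht
    constructor
    · have := flow_upper f (fun t => -(Y t ζ)) b
        (fun τ hτ => by
          have := (hYode ζ τ hτ).neg
          rw [show f (-(Y τ ζ)) = -(f (Y τ ζ)) from hodd _]
          exact this)
        hfneg (by show -(Y 0 ζ) ≤ b; rw [hY0]; linarith [hζ.1]) t ht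
      have h2 : -(Y t ζ) ≤ b := this
      linarith
    · exact flow_upper f (fun t => Y t ζ) b (fun τ hτ => hYode ζ τ hτ) hfneg
        (by show Y 0 ζ ≤ b; rw [hY0]; exact hζ.2) t ht
  refine ⟨δ / (K : ℝ), by positivity, 1, one_pos, ?_⟩
  intro ε hε hε1 ξ hξ1 hξ2 τ hτ0 hτC
  set h := ε ^ (β + δ) with hhdef
  have hhpos : 0 < h := Real.rpow_pos_of_pos hε _
  have hεα : 0 < ε ^ α := Real.rpow_pos_of_pos hε _
  have hξmem : ξ ∈ Icc (-b) b := ⟨by linarith, by linarith⟩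
  have hξhmem : ξ + h ∈ Icc (-b) b := ⟨by linarith, by linarith⟩
  -- Grönwall
  have gron := dist_le_of_trajectories_ODE_of_mem
    (v := fun _ u => f u) (s := fun _ => Icc (-b) b) (K := K)
    (fun _ _ => hlip)
    (f := fun t => Y t ξ) (g := fun t => Y t (ξ + h)) (a := 0) (b := τ) (δ := h)
    (fun t ht => ((hYode ξ t ht.1).continuousAt).continuousWithinAt)
    (fun t ht => (hYode ξ t ht.1).hasDerivWithinAt)
    (fun t ht => inv ξ hξmem t ht.1)
    (fun t ht => ((hYode (ξ + h) t ht.1).continuousAt).continuousWithinAt)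
    (fun t ht => (hYode (ξ + h) t ht.1).hasDerivWithinAt)
    (fun t ht => inv (ξ + h) hξhmem t ht.1)
    (by
      show dist (Y 0 ξ) (Y 0 (ξ + h)) ≤ h
      rw [hY0, hY0, Real.dist_eq]
      rw [show ξ - (ξ + h) = -h by ring, abs_neg, abs_of_pos hhpos])
    τ ⟨hτ0, le_rfl⟩
  have hlogneg : Real.log ε < 0 := Real.log_neg hε hε1
  have hexp : Real.exp ((K : ℝ) * (δ / (K : ℝ) * |Real.log ε|)) = ε ^ (-δ) := by
    rw [Real.rpow_def_of_pos hε, abs_of_neg hlogneg]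
    congr 1
    field_simp
  calc Y τ (ξ + h) - Y τ ξ ≤ |Y τ (ξ + h) - Y τ ξ| := le_abs_self _
    _ = dist (Y τ ξ) (Y τ (ξ + h)) := by rw [dist_comm, Real.dist_eq]
    _ ≤ h * Real.exp ((K : ℝ) * (τ - 0)) := gron
    _ ≤ h * Real.exp ((K : ℝ) * (δ / (K : ℝ) * |Real.log ε|)) := by
        have : (K : ℝ) * (τ - 0) ≤ (K : ℝ) * (δ / (K : ℝ) * |Real.log ε|) := by
          apply mul_le_mul_of_nonneg_left _ hKpos.le
          simpa using hτC
        exact mul_le_mul_of_nonneg_left (Real.exp_le_exp.2 this) hhpos.le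
    _ = ε ^ (β + δ) * ε ^ (-δ) := by rw [hexp]
    _ = ε ^ β := by rw [← Real.rpow_add hε]; ring_nf
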